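/- Let U be a finite complex of finite-dimensional k-vector spaces (concentrated in degrees 0,…,p) with homology dimensions μ_i = dim H_i(U) for 0 ≤ i ≤ p. If W is any finite exact complex of finite-dimensional k-vector spaces containing U as a subcomplex, then dim W_{i+1} ≥ dim U_{i+1} + μ_i for all 0 ≤ i ≤ p, and dim W₀ ≥ dim U₀. In particular the total dimension of W is at least dim U + Σ_{i=0}^{p} μ_i. -/
import Mathlib

lemma finrank_map_add_finrank_inf_ker {k M N : Type*} [Field k] [AddCommGroup M] [Module k M]
    [AddCommGroup N] [Module k N] [FiniteDimensional k M]
    (f : M →ₗ[k] N) (S : Submodule k M) :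
    Module.finrank k ↥(Submodule.map f S) + Module.finrank k ↥(S ⊓ LinearMap.ker f) =
      Module.finrank k ↥S := by
  have h := LinearMap.finrank_range_add_finrank_ker (f.domRestrict S)
  rw [LinearMap.range_domRestrict, LinearMap.ker_domRestrict] at h
  rw [← h]
  congr 1
  rw [(Submodule.equivSubtypeMap S (Submodule.comap S.subtype (LinearMap.ker f))).finrank_eq,
    Submodule.map_comap_subtype]

/-- Let `U` be a finite complex of finite-dimensional `k`-vector spaces
(concentrated in degrees `0, …, p`) with homology dimensions `μ_i = dim H_i(U)`.  If `W`
is any finite exact complex of finite-dimensional `k`-vector spaces containing `U` as a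
subcomplex (here `U` is realized as a family of subspaces `U i ≤ W i` preserved by the
differential `δ` of `W`), then `dim W_{i+1} ≥ dim U_{i+1} + μ_i` for all `0 ≤ i ≤ p`,
and `dim W₀ ≥ dim U₀`.  In particular the total dimension of `W` is at least
`dim U + Σ_{i=0}^{p} μ_i`. -/
theorem dim_of_exact_complex_containing_subcomplex {k : Type*} [Field k]
    (W : ℕ → Type*) [∀ i, AddCommGroup (W i)] [∀ i, Module k (W i)]
    [∀ i, FiniteDimensional k (W i)]
    (δ : ∀ i, W (i + 1) →ₗ[k] W i)
    (hδδ : ∀ i, (δ i).comp (δ (i + 1)) = 0)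
    (hex0 : LinearMap.range (δ 0) = ⊤)
    (hex : ∀ i, LinearMap.ker (δ i) = LinearMap.range (δ (i + 1)))
    (U : ∀ i, Submodule k (W i))
    (hsub : ∀ i, Submodule.map (δ i) (U (i + 1)) ≤ U i)
    (p : ℕ) (hUp : ∀ i, p < i → U i = ⊥)
    (q : ℕ) (hWq : ∀ i, q < i → Subsingleton (W i)) :
    let μ : ℕ → ℕ := fun i =>
      match i with
      | 0 => Module.finrank k ↥(U 0) - Module.finrank k ↥(Submodule.map (δ 0) (U 1))
      | j + 1 =>
        Module.finrank k ↥(U (j + 1) ⊓ LinearMap.ker (δ j))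
          - Module.finrank k ↥(Submodule.map (δ (j + 1)) (U (j + 2)))
    (Module.finrank k ↥(U 0) ≤ Module.finrank k (W 0)) ∧
    (∀ i, i ≤ p →
      Module.finrank k ↥(U (i + 1)) + μ i ≤ Module.finrank k (W (i + 1))) ∧
    ((∑ i ∈ Finset.range (q + 1), Module.finrank k ↥(U i))
        + ∑ i ∈ Finset.range (p + 1), μ i
      ≤ ∑ i ∈ Finset.range (q + 1), Module.finrank k (W i)) := by
  intro μ
  -- cycle submodules
  set Z : ∀ i, Submodule k (W i) := fun i =>
    match i with
    | 0 => U 0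
    | j + 1 => U (j + 1) ⊓ LinearMap.ker (δ j) with hZ
  have hμ : ∀ i, μ i = Module.finrank k ↥(Z i)
      - Module.finrank k ↥(Submodule.map (δ i) (U (i + 1))) := by
    intro i; cases i <;> rfl
  have hBZ : ∀ i, Submodule.map (δ i) (U (i + 1)) ≤ Z i := by
    intro i
    cases i with
    | zero => exact hsub 0
    | succ j =>
      refine le_inf (hsub (j + 1)) ?_
      rintro x ⟨y, hy, rfl⟩
      exact LinearMap.mem_ker.mpr (DFunLike.congr_fun (hδδ j) y)
  have hZr : ∀ i, Z i ≤ LinearMap.range (δ i) := by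
    intro i
    cases i with
    | zero => rw [hex0]; exact le_top
    | succ j => exact le_trans inf_le_right (hex j).le
  -- key inequality for every i
  have key : ∀ i, Module.finrank k ↥(U (i + 1)) + μ i ≤ Module.finrank k (W (i + 1)) := by
    intro i
    set S : Submodule k (W (i + 1)) := Submodule.comap (δ i) (Z i) with hS
    have h1 : Submodule.map (δ i) S = Z i := by
      rw [hS, Submodule.map_comap_eq, inf_eq_right.mpr (hZr i)]
    have h2 : LinearMap.ker (δ i) ≤ S := by
      intro x hx
      simp only [hS, Submodule.mem_comap, LinearMap.mem_ker.mp hx]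
      exact (Z i).zero_mem
    have e1 := finrank_map_add_finrank_inf_ker (δ i) S
    rw [h1, inf_eq_right.mpr h2] at e1
    have e1' : Module.finrank k ↥S ≤ Module.finrank k (W (i + 1)) := Submodule.finrank_le S
    have e2 := finrank_map_add_finrank_inf_ker (δ i) (U (i + 1))
    have e3 : Module.finrank k ↥(U (i + 1) ⊓ LinearMap.ker (δ i))
        ≤ Module.finrank k ↥(LinearMap.ker (δ i)) := Submodule.finrank_mono inf_le_right
    have e4 : Module.finrank k ↥(Submodule.map (δ i) (U (i + 1)))
        ≤ Module.finrank k ↥(Z i) := Submodule.finrank_mono (hBZ i)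
    rw [hμ i]
    omega
  have part1 : Module.finrank k ↥(U 0) ≤ Module.finrank k (W 0) := Submodule.finrank_le (U 0)
  refine ⟨part1, fun i _ => key i, ?_⟩
  -- μ vanishes at indices ≥ q
  have hμ0 : ∀ i, q ≤ i → μ i = 0 := by
    intro i hi
    have h := key i
    have : Module.finrank k (W (i + 1)) = 0 := by
      have := hWq (i + 1) (by omega)
      exact Module.finrank_zero_of_subsingleton
    omega
  have hsum1 : ∑ i ∈ Finset.range (p + 1), μ i ≤ ∑ i ∈ Finset.range q, μ i := by
    calc ∑ i ∈ Finset.range (p + 1), μ i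
        = ∑ i ∈ Finset.range (min (p + 1) q), μ i := by
          refine (Finset.sum_subset ?_ ?_).symm
          · exact Finset.range_subset_range.mpr (min_le_left _ _)
          · intro x hx hnx
            simp only [Finset.mem_range] at hx hnx
            exact hμ0 x (by omega)
      _ ≤ ∑ i ∈ Finset.range q, μ i :=
          Finset.sum_le_sum_of_subset (Finset.range_subset_range.mpr (min_le_right _ _))
  have hsum2 : (∑ i ∈ Finset.range q, Module.finrank k ↥(U (i + 1)))
      + ∑ i ∈ Finset.range q, μ i ≤ ∑ i ∈ Finset.range q, Module.finrank k (W (i + 1)) := by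
    rw [← Finset.sum_add_distrib]
    exact Finset.sum_le_sum fun i _ => key i
  rw [Finset.sum_range_succ' (fun i => Module.finrank k ↥(U i)) q,
    Finset.sum_range_succ' (fun i => Module.finrank k (W i)) q]
  omega
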